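/- Let 𝓜 : ℝ^m → ℝ^m be a Σ∆ map with input x ∈ ℝ. Suppose Γ₀ ⊆ ℝ^m is a bounded set with 𝓜(Γ₀) ⊆ Γ₀, and define Γ = ⋂_{k ≥ 0} 𝓜^k(Γ₀). Then 𝓜(Γ) = Γ. -/

import Mathlib

open MeasureTheory

noncomputable section

/-- The m×m lower-triangular matrix of ones: `L i j = 1` iff `j ≤ i`. -/
def Lmat (m : ℕ) : Matrix (Fin m) (Fin m) ℝ :=
  fun i j => if j ≤ i then 1 else 0

/-- A Σ∆ map with input `x`: a piecewise affine map `v ↦ L v + x 𝟏 + d_i` on a finite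
partition `Ω_1, …, Ω_K` of `ℝ^m`, with integer translation vectors `d_i`. -/
def IsSigmaDeltaMap (m : ℕ) (x : ℝ) (M : (Fin m → ℝ) → (Fin m → ℝ)) : Prop :=
  ∃ (K : ℕ) (Ω : Fin K → Set (Fin m → ℝ)) (d : Fin K → (Fin m → ℤ)),
    (∀ v, ∃! i, v ∈ Ω i) ∧
    ∀ i, ∀ v ∈ Ω i, M v = (Lmat m).mulVec v + (fun _ => x) + (fun j => (d i j : ℝ))

/-- The matrix `Lmat m` has injective `mulVec`, being lower triangular with unit diagonal. -/
lemma Lmat_mulVec_injective (m : ℕ) : Function.Injective ((Lmat m).mulVec) := by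
  apply Matrix.mulVec_injective_iff_isUnit.mpr
  rw [Matrix.isUnit_iff_isUnit_det]
  have h : (Lmat m).BlockTriangular OrderDual.toDual := by
    intro i j hij
    exact if_neg (not_le.mpr hij)
  rw [Matrix.det_of_lowerTriangular _ h]
  simp [Lmat]

/-- if `Γ₀` is bounded and positively invariant under a Σ∆ map `M`, then
`Γ = ⋂_{k ≥ 0} M^k(Γ₀)` satisfies `M(Γ) = Γ`. -/
theorem sigma_delta_invariant_set (m : ℕ) (hm : 1 ≤ m) (x : ℝ)
    (M : (Fin m → ℝ) → (Fin m → ℝ)) (hM : IsSigmaDeltaMap m x M)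
    (Γ₀ : Set (Fin m → ℝ)) (hbdd : Bornology.IsBounded Γ₀)
    (hinv : M '' Γ₀ ⊆ Γ₀) :
    M '' (⋂ k : ℕ, M^[k] '' Γ₀) = ⋂ k : ℕ, M^[k] '' Γ₀ := by
  obtain ⟨K, Ω, d, hpart, hform⟩ := hM
  have hstep : ∀ k : ℕ, M^[k+1] '' Γ₀ ⊆ M^[k] '' Γ₀ := by
    intro k
    rw [Function.iterate_succ, Set.image_comp]
    exact Set.image_mono hinv
  have hanti : ∀ {k l : ℕ}, k ≤ l → M^[l] '' Γ₀ ⊆ M^[k] '' Γ₀ := by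
    intro k l hkl
    induction l with
    | zero => simp [Nat.le_zero.mp hkl]
    | succ n ih =>
      rcases Nat.lt_or_ge k (n+1) with h | h
      · exact (hstep n).trans (ih (Nat.lt_succ_iff.mp h))
      · have : k = n + 1 := le_antisymm hkl h
        subst this; exact subset_rfl
  apply Set.Subset.antisymm
  · rintro y ⟨v, hv, rfl⟩
    refine Set.mem_iInter.mpr fun k => ?_
    have hvk : v ∈ M^[k] '' Γ₀ := Set.mem_iInter.mp hv k
    have h1 : M v ∈ M^[k+1] '' Γ₀ := by
      rw [Function.iterate_succ', Set.image_comp]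
      exact Set.mem_image_of_mem M hvk
    exact hstep k h1
  · intro y hy
    have hchoice : ∀ k : ℕ, ∃ v, v ∈ M^[k] '' Γ₀ ∧ M v = y := by
      intro k
      have h1 : y ∈ M^[k+1] '' Γ₀ := Set.mem_iInter.mp hy (k+1)
      rw [Function.iterate_succ', Set.image_comp] at h1
      obtain ⟨v, hv, hvy⟩ := h1
      exact ⟨v, hv, hvy⟩
    choose v hv1 hv2 using hchoice
    have hidx : ∀ k, ∃ i, v k ∈ Ω i := fun k => (hpart (v k)).exists
    choose idx hmem using hidx
    obtain ⟨i, hi⟩ := Finite.exists_infinite_fiber idx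
    have hSinf : (idx ⁻¹' {i}).Infinite := Set.infinite_coe_iff.mp hi
    obtain ⟨k₀, hk₀⟩ := hSinf.nonempty
    have heq : ∀ k, idx k = i → v k = v k₀ := by
      intro k hk
      apply Lmat_mulVec_injective m
      have hMeq : M (v k) = M (v k₀) := by rw [hv2 k, hv2 k₀]
      rw [hform (idx k) (v k) (hmem k), hform (idx k₀) (v k₀) (hmem k₀),
        hk, hk₀] at hMeq
      exact add_right_cancel (add_right_cancel hMeq)
    refine ⟨v k₀, Set.mem_iInter.mpr fun k => ?_, hv2 k₀⟩
    obtain ⟨k', hk'S, hkk'⟩ := hSinf.exists_gt k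
    have : v k' = v k₀ := heq k' hk'S
    rw [← this]
    exact hanti hkk'.le (hv1 k')
  done
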